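/- In the revised semantics, the distributivity axiom fails: (a.1 + 1) • b.1 is not strongly bisimilar (indeed not branching bisimilar) to a.1 • b.1 + 1 • b.1. -/

import Mathlib

namespace TCPRev

/-- Actions: receive `c?d`, send `c!d`, and the internal action `τ`. -/
inductive Act (C D : Type) : Type
  | recv : C → D → Act C D
  | send : C → D → Act C D
  | tau : Act C D

/-- `a ∈ I_C'`: the communication actions over channels in `Cs`. -/
def Act.inIC {C D : Type} (Cs : Set C) : Act C D → Prop
  | .recv c _ => c ∈ Cs
  | .send c _ => c ∈ Cs
  | .tau => False

/-- Process expressions of TCP• (with iteration and nesting). -/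
inductive Proc (C D : Type) : Type
  | zero : Proc C D
  | one : Proc C D
  | act : Act C D → Proc C D → Proc C D
  | seq : Proc C D → Proc C D → Proc C D
  | alt : Proc C D → Proc C D → Proc C D
  | par : Set C → Proc C D → Proc C D → Proc C D
  | star : Proc C D → Proc C D
  | nest : Proc C D → Proc C D → Proc C D

variable {C D : Type}

/-- Termination predicate `P ↓`. -/
def Proc.term : Proc C D → Prop
  | .zero => False
  | .one => True
  | .act _ _ => False
  | .seq p q => p.term ∧ q.term
  | .alt p q => p.term ∨ q.term
  | .par _ p q => p.term ∧ q.term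
  | .star _ => True
  | .nest _ q => q.term

/-- The transition relation of TCP• under the revised operational semantics of
sequential composition: `P₁ • P₂` may only move in its second component when
`P₁ ↓` and `P₁` has no outgoing transitions. -/
def Tr : Proc C D → Act C D → Proc C D → Prop
  | .zero, _, _ => False
  | .one, _, _ => False
  | .act a p, b, r => b = a ∧ r = p
  | .alt p q, a, r => Tr p a r ∨ Tr q a r
  | .seq p q, a, r =>
      (∃ p', Tr p a p' ∧ r = .seq p' q) ∨
      (p.term ∧ (∀ b p', ¬ Tr p b p') ∧ Tr q a r)
  | .par Cs p q, a, r =>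
      (∃ p', Tr p a p' ∧ ¬ a.inIC Cs ∧ r = .par Cs p' q) ∨
      (∃ q', Tr q a q' ∧ ¬ a.inIC Cs ∧ r = .par Cs p q') ∨
      (a = .tau ∧ ∃ c ∈ Cs, ∃ d p' q',
        ((Tr p (.recv c d) p' ∧ Tr q (.send c d) q') ∨
         (Tr p (.send c d) p' ∧ Tr q (.recv c d) q')) ∧ r = .par Cs p' q')
  | .star p, a, r => ∃ p', Tr p a p' ∧ r = .seq p' (.star p)
  | .nest p q, a, r =>
      (∃ p', Tr p a p' ∧ r = .seq p' (.seq (.nest p q) p)) ∨ Tr q a r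

/-- τ-steps. -/
def TauStep (p q : Proc C D) : Prop := Tr p .tau q

/-- Reflexive-transitive closure of τ-steps. -/
def TauReach : Proc C D → Proc C D → Prop := Relation.ReflTransGen TauStep

/-- `p →(a) q`. -/
def OptStep (p : Proc C D) (a : Act C D) (q : Proc C D) : Prop :=
  Tr p a q ∨ (a = .tau ∧ p = q)

/-- A symmetric relation `R` is a branching bisimulation. -/
def IsBranchingBisim (R : Proc C D → Proc C D → Prop) : Prop :=
  Symmetric R ∧ ∀ p q, R p q →
    (∀ a p', Tr p a p' →
      ∃ q'' q', TauReach q q'' ∧ OptStep q'' a q' ∧ R p q'' ∧ R p' q') ∧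
    (p.term → ∃ q', TauReach q q' ∧ q'.term)

/-- The divergence-preservation condition for a relation `R`. -/
def DivPres (R : Proc C D → Proc C D → Prop) : Prop :=
  ∀ p q, R p q → ∀ f : ℕ → Proc C D, f 0 = p →
    (∀ i, TauStep (f i) (f (i + 1))) → (∀ i, R (f i) q) →
    ∃ q', Relation.TransGen TauStep q q' ∧ ∃ i, R (f i) q'

/-- Divergence-preserving branching bisimulation. -/
def IsDPBranchingBisim (R : Proc C D → Proc C D → Prop) : Prop :=
  IsBranchingBisim R ∧ DivPres R

/-- The rootedness condition of `R` on the pair `(p, q)`. -/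
def RootedOn (R : Proc C D → Proc C D → Prop) (p q : Proc C D) : Prop :=
  (∀ a p', Tr p a p' → ∃ q', Tr q a q' ∧ R p' q') ∧
  (∀ a q', Tr q a q' → ∃ p', Tr p a p' ∧ R p' q') ∧
  (p.term ↔ q.term)

/-- Rooted divergence-preserving branching bisimilarity `⇆Δ`. -/
def RDPBBisimilar (p q : Proc C D) : Prop :=
  ∃ R, IsDPBranchingBisim R ∧ R p q ∧ RootedOn R p q


/-- A symmetric relation `R` is a strong bisimulation. -/
def IsStrongBisim (R : Proc C D → Proc C D → Prop) : Prop :=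
  Symmetric R ∧ ∀ p q, R p q →
    (∀ a p', Tr p a p' → ∃ q', Tr q a q' ∧ R p' q') ∧ (p.term → q.term)

/-- Strong bisimilarity. -/
def StrongBisimilar (p q : Proc C D) : Prop :=
  ∃ R, IsStrongBisim R ∧ R p q

/-- Branching bisimilarity. -/
def BranchingBisimilar (p q : Proc C D) : Prop :=
  ∃ R, IsBranchingBisim R ∧ R p q

private lemma trP_elim {C D : Type} {a b c : Act C D} {x : Proc C D}
    (h : Tr (Proc.seq (Proc.alt (Proc.act a Proc.one) Proc.one) (Proc.act b Proc.one)) c x) :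
    c = a ∧ x = Proc.seq Proc.one (Proc.act b Proc.one) := by
  simp [Tr] at h
  exact h

private lemma trQ_b {C D : Type} (a b : Act C D) :
    Tr (Proc.alt (Proc.seq (Proc.act a Proc.one) (Proc.act b Proc.one))
        (Proc.seq Proc.one (Proc.act b Proc.one))) b Proc.one := by
  refine Or.inr (Or.inr ?_)
  exact ⟨trivial, fun c p' h => h, rfl, rfl⟩

private lemma noTauP {C D : Type} {a b : Act C D} (ha : a ≠ .tau) :
    ∀ x : Proc C D, ¬ TauStep (Proc.seq (Proc.alt (Proc.act a Proc.one) Proc.one)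
        (Proc.act b Proc.one)) x := by
  intro x h
  exact ha (trP_elim h).1.symm

private lemma noTauP' {C D : Type} {b : Act C D} (hb : b ≠ .tau) :
    ∀ x : Proc C D, ¬ TauStep (Proc.seq Proc.one (Proc.act b Proc.one)) x := by
  intro x h
  simp [TauStep, Tr] at h
  exact hb h.2.1.symm

private lemma tauReach_eq {C D : Type} {p x : Proc C D}
    (hno : ∀ y, ¬ TauStep p y) (h : TauReach p x) : x = p := by
  induction h with
  | refl => rfl
  | tail _ hstep ih => exact absurd (ih ▸ hstep) (hno _)


/-- In the revised semantics the distributivity axiom fails: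
`(a.1 + 1) • b.1` is not strongly bisimilar (indeed not branching bisimilar)
to `a.1 • b.1 + 1 • b.1`. -/
theorem distributivity_fails {C D : Type} (a b : Act C D)
    (ha : a ≠ .tau) (hb : b ≠ .tau) :
    ¬ StrongBisimilar
        (Proc.seq (Proc.alt (Proc.act a Proc.one) Proc.one)
          (Proc.act b Proc.one))
        (Proc.alt (Proc.seq (Proc.act a Proc.one) (Proc.act b Proc.one))
          (Proc.seq Proc.one (Proc.act b Proc.one))) ∧
    ¬ BranchingBisimilar
        (Proc.seq (Proc.alt (Proc.act a Proc.one) Proc.one)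
          (Proc.act b Proc.one))
        (Proc.alt (Proc.seq (Proc.act a Proc.one) (Proc.act b Proc.one))
          (Proc.seq Proc.one (Proc.act b Proc.one))) := by
  set P := Proc.seq (Proc.alt (Proc.act a Proc.one) Proc.one) (Proc.act b Proc.one) with hP
  set Q := Proc.alt (Proc.seq (Proc.act a Proc.one) (Proc.act b Proc.one))
          (Proc.seq Proc.one (Proc.act b Proc.one)) with hQ
  constructor
  · rintro ⟨R, ⟨hsym, hstep⟩, hPQ⟩
    obtain ⟨p', hp', hR⟩ := (hstep Q P (hsym hPQ)).1 b Proc.one (trQ_b a b)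
    obtain ⟨-, rfl⟩ := trP_elim hp'
    have := (hstep Proc.one _ hR).2 trivial
    exact this.2
  · rintro ⟨R, ⟨hsym, hstep⟩, hPQ⟩
    obtain ⟨q'', q', hreach, hopt, -, hR⟩ :=
      (hstep Q P (hsym hPQ)).1 b Proc.one (trQ_b a b)
    have hq'' : q'' = P := tauReach_eq (noTauP ha) hreach
    subst hq''
    rcases hopt with h | ⟨h, -⟩
    · obtain ⟨-, rfl⟩ := trP_elim h
      obtain ⟨r, hr, hterm⟩ := (hstep Proc.one _ hR).2 trivial
      have : r = Proc.seq Proc.one (Proc.act b Proc.one) := tauReach_eq (noTauP' hb) hr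
      subst this
      exact hterm.2
    · exact hb h

end TCPRev
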